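/- Let V be an N×N complex unitary matrix and let g : ℂ^N → ℂ be permutation invariant, with g(v_i) ≠ 0 and g(v_{f,i}) ≠ 0 for every i = 1,…,N. Then the function h(λ, V) = D_f^{-1} V D λ simultaneously satisfies, for every λ ∈ ℂ^N and every N×N permutation matrix P: (i) h(h(λ, V), V^H) = λ; (ii) h(λ, PV) = P h(λ, V); and (iii) h(P^T λ, V P) = h(λ, V). -/

import Mathlib

open Matrix

/-- `g : ℂ^N → ℂ` is permutation invariant if `g (P x) = g x` for every
permutation matrix `P` and every `x`. -/
def PermInvariant (N : ℕ) (g : (Fin N → ℂ) → ℂ) : Prop :=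
  ∀ (σ : Equiv.Perm (Fin N)) (x : Fin N → ℂ), g ((σ.permMatrix ℂ).mulVec x) = g x

/-- `colDiag g V = diag (g v_1, …, g v_N)` where `v_i` are the columns of `V`. -/
def colDiag (N : ℕ) (g : (Fin N → ℂ) → ℂ) (V : Matrix (Fin N) (Fin N) ℂ) :
    Matrix (Fin N) (Fin N) ℂ :=
  Matrix.diagonal fun i => g fun j => V j i

/-- The eigenvalue map `h(λ, V) = D_f⁻¹ V D λ`, where `D = diag(g(v_i))` with `v_i`
the columns of `V`, and `D_f = diag(g(v_{f,i}))` with `v_{f,i}` the columns of `Vᴴ`. -/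
noncomputable def hMap (N : ℕ) (g : (Fin N → ℂ) → ℂ) (V : Matrix (Fin N) (Fin N) ℂ)
    (lam : Fin N → ℂ) : Fin N → ℂ :=
  ((colDiag N g Vᴴ)⁻¹ * V * colDiag N g V).mulVec lam


section Helpers

variable {N : ℕ}

private lemma permMatrix_apply' (σ : Equiv.Perm (Fin N)) (i j : Fin N) :
    σ.permMatrix ℂ i j = if σ i = j then (1 : ℂ) else 0 := by
  simp [PEquiv.toMatrix_apply, Equiv.toPEquiv_apply]

private lemma permMatrix_mulVec' (σ : Equiv.Perm (Fin N)) (x : Fin N → ℂ) :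
    (σ.permMatrix ℂ).mulVec x = fun i => x (σ i) := by
  funext i
  simp [mulVec, dotProduct, permMatrix_apply', Equiv.toPEquiv_apply,
    Finset.sum_ite_eq]

private lemma perm_mul_apply (σ : Equiv.Perm (Fin N)) (M : Matrix (Fin N) (Fin N) ℂ)
    (i j : Fin N) : (σ.permMatrix ℂ * M) i j = M (σ i) j := by
  rw [PEquiv.toMatrix_toPEquiv_mul]
  rfl

private lemma mul_perm_apply (σ : Equiv.Perm (Fin N)) (M : Matrix (Fin N) (Fin N) ℂ)
    (i j : Fin N) : (M * σ.permMatrix ℂ) i j = M i (σ.symm j) := by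
  rw [PEquiv.mul_toMatrix_toPEquiv]
  rfl

private lemma permMatrix_transpose (σ : Equiv.Perm (Fin N)) :
    (σ.permMatrix ℂ)ᵀ = (σ⁻¹).permMatrix ℂ := by
  ext i j
  rw [transpose_apply, permMatrix_apply', permMatrix_apply']
  have h : σ j = i ↔ σ⁻¹ i = j := by
    constructor
    · rintro rfl; simp
    · rintro rfl; simp
  simp [h]

private lemma perm_mul_perm_inv (σ : Equiv.Perm (Fin N)) :
    σ.permMatrix ℂ * (σ⁻¹).permMatrix ℂ = 1 := by
  ext i j
  rw [perm_mul_apply, permMatrix_apply']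
  simp [Matrix.one_apply, Equiv.symm_apply_eq, eq_comm]

private lemma diag_mul_diag_inv (v : Fin N → ℂ) (hv : ∀ i, v i ≠ 0) :
    diagonal v * diagonal (fun i => (v i)⁻¹) = 1 := by
  have h : (fun i => v i * (v i)⁻¹) = fun _ => (1 : ℂ) :=
    funext fun i => mul_inv_cancel₀ (hv i)
  rw [diagonal_mul_diagonal, h, diagonal_one]

private lemma diag_inv_mul_diag (v : Fin N → ℂ) (hv : ∀ i, v i ≠ 0) :
    diagonal (fun i => (v i)⁻¹) * diagonal v = 1 := by
  have h : (fun i => (v i)⁻¹ * v i) = fun _ => (1 : ℂ) :=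
    funext fun i => inv_mul_cancel₀ (hv i)
  rw [diagonal_mul_diagonal, h, diagonal_one]

private lemma diag_inv (v : Fin N → ℂ) (hv : ∀ i, v i ≠ 0) :
    (diagonal v)⁻¹ = diagonal (fun i => (v i)⁻¹) :=
  Matrix.inv_eq_right_inv (diag_mul_diag_inv v hv)

end Helpers

/-- Theorem 1: the map `h(λ, V) = D_f⁻¹ V D λ` simultaneously satisfies the
duality (A1), reordering (A2) and permutation (A3) axioms. -/
theorem dual_eigenvalue_map_satisfies_axioms (N : ℕ) (hN : 1 ≤ N)
    (V : Matrix (Fin N) (Fin N) ℂ) (hV : Vᴴ * V = 1)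
    (g : (Fin N → ℂ) → ℂ) (hg : PermInvariant N g)
    (hD : ∀ i, g (fun j => V j i) ≠ 0) (hDf : ∀ i, g (fun j => Vᴴ j i) ≠ 0) :
    ∀ (lam : Fin N → ℂ) (σ : Equiv.Perm (Fin N)),
      hMap N g Vᴴ (hMap N g V lam) = lam ∧
      hMap N g (σ.permMatrix ℂ * V) lam = (σ.permMatrix ℂ).mulVec (hMap N g V lam) ∧
      hMap N g (V * σ.permMatrix ℂ) ((σ.permMatrix ℂ)ᵀ.mulVec lam) = hMap N g V lam := by
  intro lam σ
  set d : Fin N → ℂ := fun i => g (fun j => V j i) with hd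
  set df : Fin N → ℂ := fun i => g (fun j => Vᴴ j i) with hdf
  have hDmat : colDiag N g V = diagonal d := rfl
  have hDfmat : colDiag N g Vᴴ = diagonal df := rfl
  refine ⟨?_, ?_, ?_⟩
  · -- (A1) duality
    rw [hMap, hMap, mulVec_mulVec, conjTranspose_conjTranspose, hDmat, hDfmat,
        diag_inv d hD, diag_inv df hDf]
    have key : diagonal (fun i => (d i)⁻¹) * Vᴴ * diagonal df *
        (diagonal (fun i => (df i)⁻¹) * V * diagonal d) = 1 := by
      calc diagonal (fun i => (d i)⁻¹) * Vᴴ * diagonal df *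
            (diagonal (fun i => (df i)⁻¹) * V * diagonal d)
          = diagonal (fun i => (d i)⁻¹) *
              (Vᴴ * ((diagonal df * diagonal (fun i => (df i)⁻¹)) * (V * diagonal d))) := by
            simp only [Matrix.mul_assoc]
        _ = diagonal (fun i => (d i)⁻¹) * ((Vᴴ * V) * diagonal d) := by
            rw [diag_mul_diag_inv df hDf, Matrix.one_mul, Matrix.mul_assoc]
        _ = diagonal (fun i => (d i)⁻¹) * diagonal d := by rw [hV, Matrix.one_mul]
        _ = 1 := diag_inv_mul_diag d hD
    rw [key, one_mulVec]
  · -- (A2) reordering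
    rw [hMap, hMap, mulVec_mulVec]
    have hcol : colDiag N g (σ.permMatrix ℂ * V) = diagonal d := by
      have h : (fun i => g (fun j => (σ.permMatrix ℂ * V) j i)) = d := by
        funext i
        have h2 : (fun j => (σ.permMatrix ℂ * V) j i)
            = (σ.permMatrix ℂ).mulVec (fun j => V j i) := by
          funext j
          rw [perm_mul_apply, permMatrix_mulVec']
        rw [h2, hg]
      rw [colDiag, h]
    have hcolf : colDiag N g (σ.permMatrix ℂ * V)ᴴ = diagonal (fun i => df (σ i)) := by
      have h : (fun i => g (fun j => (σ.permMatrix ℂ * V)ᴴ j i))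
          = fun i => df (σ i) := by
        funext i
        have h2 : (fun j => (σ.permMatrix ℂ * V)ᴴ j i) = fun j => Vᴴ j (σ i) := by
          funext j
          rw [conjTranspose_apply, perm_mul_apply, conjTranspose_apply]
        rw [h2]
      rw [colDiag, h]
    have hswap : diagonal (fun i => (df (σ i))⁻¹) * σ.permMatrix ℂ =
        σ.permMatrix ℂ * diagonal (fun i => (df i)⁻¹) := by
      ext i j
      rw [diagonal_mul, mul_diagonal, permMatrix_apply']
      by_cases h : σ i = j
      · subst h; simp
      · simp [h]
    have hdfσ : ∀ i, df (σ i) ≠ 0 := fun i => hDf (σ i)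
    have key : (colDiag N g (σ.permMatrix ℂ * V)ᴴ)⁻¹ * (σ.permMatrix ℂ * V) *
        colDiag N g (σ.permMatrix ℂ * V) =
        σ.permMatrix ℂ * ((colDiag N g Vᴴ)⁻¹ * V * colDiag N g V) := by
      rw [hcol, hcolf, hDmat, hDfmat, diag_inv _ hdfσ, diag_inv df hDf]
      calc diagonal (fun i => (df (σ i))⁻¹) * (σ.permMatrix ℂ * V) * diagonal d
          = diagonal (fun i => (df (σ i))⁻¹) * σ.permMatrix ℂ * V * diagonal d := by
            simp only [← Matrix.mul_assoc]
        _ = σ.permMatrix ℂ * diagonal (fun i => (df i)⁻¹) * V * diagonal d := by rw [hswap]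
        _ = σ.permMatrix ℂ * (diagonal (fun i => (df i)⁻¹) * V * diagonal d) := by
            simp only [Matrix.mul_assoc]
    rw [key]
  · -- (A3) permutation
    rw [hMap, hMap, mulVec_mulVec, permMatrix_transpose]
    have hcol : colDiag N g (V * σ.permMatrix ℂ) = diagonal (fun i => d (σ.symm i)) := by
      have h : (fun i => g (fun j => (V * σ.permMatrix ℂ) j i))
          = fun i => d (σ.symm i) := by
        funext i
        have h2 : (fun j => (V * σ.permMatrix ℂ) j i) = fun j => V j (σ.symm i) := by
          funext j
          rw [mul_perm_apply]
        rw [h2]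
      rw [colDiag, h]
    have hcolf : colDiag N g (V * σ.permMatrix ℂ)ᴴ = diagonal df := by
      have h : (fun i => g (fun j => (V * σ.permMatrix ℂ)ᴴ j i)) = df := by
        funext i
        have h2 : (fun j => (V * σ.permMatrix ℂ)ᴴ j i)
            = ((σ⁻¹).permMatrix ℂ).mulVec (fun j => Vᴴ j i) := by
          funext j
          rw [conjTranspose_apply, mul_perm_apply, permMatrix_mulVec']
          rfl
        rw [h2, hg]
      rw [colDiag, h]
    have hswap : diagonal (fun i => d (σ.symm i)) * (σ⁻¹).permMatrix ℂ =
        (σ⁻¹).permMatrix ℂ * diagonal d := by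
      ext i j
      rw [diagonal_mul, mul_diagonal, permMatrix_apply']
      by_cases h : σ⁻¹ i = j
      · subst h; simp [Equiv.Perm.inv_def]
      · rw [Equiv.Perm.inv_def] at h; simp [h]
    have key : (colDiag N g (V * σ.permMatrix ℂ)ᴴ)⁻¹ * (V * σ.permMatrix ℂ) *
        colDiag N g (V * σ.permMatrix ℂ) * (σ⁻¹).permMatrix ℂ =
        (colDiag N g Vᴴ)⁻¹ * V * colDiag N g V := by
      rw [hcol, hcolf, hDmat, hDfmat, diag_inv df hDf]
      calc diagonal (fun i => (df i)⁻¹) * (V * σ.permMatrix ℂ) *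
            diagonal (fun i => d (σ.symm i)) * (σ⁻¹).permMatrix ℂ
          = diagonal (fun i => (df i)⁻¹) * (V * (σ.permMatrix ℂ *
              (diagonal (fun i => d (σ.symm i)) * (σ⁻¹).permMatrix ℂ))) := by
            simp only [Matrix.mul_assoc]
        _ = diagonal (fun i => (df i)⁻¹) * (V * (σ.permMatrix ℂ *
              ((σ⁻¹).permMatrix ℂ * diagonal d))) := by rw [hswap]
        _ = diagonal (fun i => (df i)⁻¹) * (V * ((σ.permMatrix ℂ * (σ⁻¹).permMatrix ℂ) *
              diagonal d)) := by rw [Matrix.mul_assoc (σ.permMatrix ℂ)]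
        _ = diagonal (fun i => (df i)⁻¹) * V * diagonal d := by
            rw [perm_mul_perm_inv, Matrix.one_mul, Matrix.mul_assoc]
    rw [key]
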